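/- Let B be a bialgebra over a field k. The trivial left B-module k (via the counit ε) is a projective right (equivalently left, mutatis mutandis) B-module if and only if B admits a normalized right co-integral, i.e., an element σ ∈ B such that σb = ε(b)σ for all b ∈ B and ε(σ) = 1. -/
import Mathlib


/- STATEMENT 10: For a bialgebra B over a field k, the trivial right B-module k
(via the counit ε) is projective if and only if B admits a normalized right
co-integral, i.e. σ ∈ B with σb = ε(b)σ for all b and ε(σ) = 1. -/

open TensorProduct

noncomputable section

variable (k : Type*) [Field k] (B : Type*) [Ring B] [Bialgebra k B]

/-- The counit as a ring homomorphism out of `Bᵐᵒᵖ` (the target `k` is commutative). -/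
def counitOp : Bᵐᵒᵖ →+* k :=
  RingHom.fromOpposite (Bialgebra.counitAlgHom k B).toRingHom
    (fun _ _ => mul_comm _ _)

/-- The trivial right `B`-module structure on `k`: `λ · b := ε(b)λ`. -/
def trivialRightModule : Module Bᵐᵒᵖ k := Module.compHom k (counitOp k B)

theorem stmt10 :
    (@Module.Projective Bᵐᵒᵖ _ k _ (trivialRightModule k B))
      ↔ ∃ σ : B, (∀ b : B, σ * b = (Coalgebra.counit (R := k) b) • σ)
          ∧ Coalgebra.counit (R := k) σ = (1 : k) := by
  letI : Module Bᵐᵒᵖ k := trivialRightModule k B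
  have hsmul : ∀ (m : Bᵐᵒᵖ) (x : k),
      m • x = Coalgebra.counit (R := k) m.unop * x := fun m x => rfl
  -- the counit as a `Bᵐᵒᵖ`-linear map
  let f : Bᵐᵒᵖ →ₗ[Bᵐᵒᵖ] k :=
    { toFun := fun m => Coalgebra.counit (R := k) m.unop
      map_add' := fun x y => by simp
      map_smul' := fun m x => by
        simp only [smul_eq_mul, MulOpposite.unop_mul, RingHom.id_apply]
        rw [hsmul]
        rw [show ∀ y : B, Coalgebra.counit (R := k) y
            = Bialgebra.counitAlgHom k B y from fun _ => rfl,
          map_mul, mul_comm]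
        rfl }
  have hfapp : ∀ m : Bᵐᵒᵖ, f m = Coalgebra.counit (R := k) m.unop := fun _ => rfl
  constructor
  · intro hproj
    have hsurj : Function.Surjective f := by
      intro c
      refine ⟨MulOpposite.op (algebraMap k B c), ?_⟩
      simp [hfapp]
    obtain ⟨g, hg⟩ :=
      Module.projective_lifting_property f (LinearMap.id (M := k)) hsurj
    refine ⟨(g 1).unop, ?_, ?_⟩
    · intro b
      have h1 : g ((MulOpposite.op b) • (1 : k)) = (MulOpposite.op b) • g 1 :=
        g.map_smul _ _
      rw [hsmul, mul_one] at h1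
      -- also `ε b = op (algebraMap k B (ε b)) • 1`
      have h2 : g ((MulOpposite.op (algebraMap k B (Coalgebra.counit (R := k) b))) • (1 : k))
          = (MulOpposite.op (algebraMap k B (Coalgebra.counit (R := k) b))) • g 1 :=
        g.map_smul _ _
      have h3 : (MulOpposite.op (algebraMap k B (Coalgebra.counit (R := k) b))) • (1 : k)
          = Coalgebra.counit (R := k) b := by
        rw [hsmul]; simp
      rw [h3] at h2
      have h4 := h1.symm.trans h2
      -- both sides are in `Bᵐᵒᵖ`
      have h5 : MulOpposite.op b * g 1
          = MulOpposite.op (algebraMap k B (Coalgebra.counit (R := k) b)) * g 1 := h4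
      have := congrArg MulOpposite.unop h5
      simp only [MulOpposite.unop_mul, MulOpposite.unop_op] at this
      rw [this, ← Algebra.commutes, ← Algebra.smul_def]
    · have := congrArg (fun h : k →ₗ[Bᵐᵒᵖ] k => h 1) hg
      simpa [hfapp] using this
  · rintro ⟨σ, hσ, hε⟩
    -- splitting `g : k → Bᵐᵒᵖ`, `g λ = op (algebraMap λ * σ)`
    let g : k →ₗ[Bᵐᵒᵖ] Bᵐᵒᵖ :=
      { toFun := fun c => MulOpposite.op (algebraMap k B c * σ)
        map_add' := fun x y => by simp [add_mul]
        map_smul' := fun m c => by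
          simp only [RingHom.id_apply, hsmul]
          rw [smul_eq_mul]
          apply MulOpposite.unop_injective
          simp only [MulOpposite.unop_mul, MulOpposite.unop_op]
          rw [map_mul]
          calc algebraMap k B (Coalgebra.counit (R := k) m.unop)
                * algebraMap k B c * σ
              = algebraMap k B c * (Coalgebra.counit (R := k) m.unop • σ) := by
                rw [Algebra.smul_def, ← mul_assoc, Algebra.commutes]
            _ = algebraMap k B c * (σ * m.unop) := by rw [hσ]
            _ = algebraMap k B c * σ * m.unop := by rw [mul_assoc] }
    have H : f.comp g = LinearMap.id := by
      ext c
      simp only [LinearMap.comp_apply, LinearMap.id_apply, LinearMap.coe_mk,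
        AddHom.coe_mk, hfapp, g]
      simp only [MulOpposite.unop_op, map_mul]
      have hmul := map_mul (Bialgebra.counitAlgHom k B) (algebraMap k B c) σ
      rw [show ∀ y : B, Coalgebra.counit (R := k) y
            = Bialgebra.counitAlgHom k B y from fun _ => rfl, hmul,
        (Bialgebra.counitAlgHom k B).commutes c,
        show Bialgebra.counitAlgHom k B σ = Coalgebra.counit (R := k) σ from rfl,
        hε, mul_one]
      simp
    exact Module.Projective.of_split g f H

end
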